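/- For all positive integers $n$ and $n'$: $\sum_{a=0}^{n\wedge n'} a!\,\sqrt{(n+n'-a)!} \le \frac{2^{2(n+n')}\, n!\, n'!}{\sqrt{(n\vee n' - n\wedge n')!}}$. -/

import Mathlib

lemma choose_le_two_pow' (m k : ℕ) : m.choose k ≤ 2 ^ m := by
  rcases le_or_gt k m with h | h
  · calc m.choose k ≤ ∑ i ∈ Finset.range (m + 1), m.choose i :=
        Finset.single_le_sum (fun i _ => Nat.zero_le _)
          (Finset.mem_range.2 (Nat.lt_succ_of_le h))
      _ = 2 ^ m := Nat.sum_range_choose m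
  · rw [Nat.choose_eq_zero_of_lt h]; exact Nat.zero_le _

lemma fact_add_le (n n' : ℕ) : (n + n').factorial ≤ 2 ^ (n + n') * n.factorial * n'.factorial := by
  have h := Nat.add_choose_mul_factorial_mul_factorial n n'
  calc (n + n').factorial = (n + n').choose n' * n.factorial * n'.factorial := h.symm
    _ ≤ 2 ^ (n + n') * n.factorial * n'.factorial := by
        have := choose_le_two_pow' (n + n') n'
        exact Nat.mul_le_mul_right _ (Nat.mul_le_mul_right _ this)

theorem stmt_14 (n n' : ℕ) (hn : 1 ≤ n) (hn' : 1 ≤ n') :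
    ∑ a ∈ Finset.range (min n n' + 1),
      (a.factorial : ℝ) * Real.sqrt ((n + n' - a).factorial)
    ≤ 2 ^ (2 * (n + n')) * n.factorial * n'.factorial /
        Real.sqrt ((max n n' - min n n').factorial) := by
  have hS : (0:ℝ) < Real.sqrt ((max n n' - min n n').factorial) :=
    Real.sqrt_pos.2 (by exact_mod_cast (max n n' - min n n').factorial_pos)
  rw [le_div_iff₀ hS, Finset.sum_mul]
  have key : ∀ a ∈ Finset.range (min n n' + 1),
      (a.factorial : ℝ) * Real.sqrt ((n + n' - a).factorial) *
        Real.sqrt ((max n n' - min n n').factorial)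
      ≤ 2 ^ (n + n') * n.factorial * n'.factorial := by
    intro a ha
    have ha' : a ≤ min n n' := Nat.lt_succ_iff.1 (Finset.mem_range.1 ha)
    have h1 : (max n n' - min n n').factorial ≤ (n + n' - a).factorial :=
      Nat.factorial_le (by omega)
    have hsq : Real.sqrt ((n + n' - a).factorial) *
        Real.sqrt ((max n n' - min n n').factorial) ≤ ((n + n' - a).factorial : ℝ) := by
      rw [← Real.sqrt_mul (by positivity)]
      calc Real.sqrt (((n+n'-a).factorial : ℝ) * ((max n n' - min n n').factorial : ℝ))
          ≤ Real.sqrt (((n+n'-a).factorial : ℝ) * ((n+n'-a).factorial : ℝ)) := by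
            apply Real.sqrt_le_sqrt
            have : ((max n n' - min n n').factorial : ℝ) ≤ ((n+n'-a).factorial : ℝ) := by
              exact_mod_cast h1
            nlinarith [show (0:ℝ) < ((n+n'-a).factorial : ℝ) from Nat.cast_pos.mpr (n+n'-a).factorial_pos]
        _ = ((n+n'-a).factorial : ℝ) := Real.sqrt_mul_self (by positivity)
    have h2 : a.factorial * (n + n' - a).factorial ≤ (n + n').factorial := by
      have hd := Nat.factorial_mul_factorial_dvd_factorial (show a ≤ n + n' by omega)
      exact Nat.le_of_dvd (n + n').factorial_pos hd
    calc (a.factorial : ℝ) * Real.sqrt ((n + n' - a).factorial) *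
          Real.sqrt ((max n n' - min n n').factorial)
        = (a.factorial : ℝ) * (Real.sqrt ((n + n' - a).factorial) *
          Real.sqrt ((max n n' - min n n').factorial)) := by ring
      _ ≤ (a.factorial : ℝ) * ((n + n' - a).factorial : ℝ) := by
          exact mul_le_mul_of_nonneg_left hsq (by positivity)
      _ ≤ ((n + n').factorial : ℝ) := by exact_mod_cast h2
      _ ≤ 2 ^ (n + n') * n.factorial * n'.factorial := by
          exact_mod_cast fact_add_le n n'
  calc ∑ a ∈ Finset.range (min n n' + 1),
        (a.factorial : ℝ) * Real.sqrt ((n + n' - a).factorial) *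
          Real.sqrt ((max n n' - min n n').factorial)
      ≤ ∑ _a ∈ Finset.range (min n n' + 1),
          (2 ^ (n + n') * n.factorial * n'.factorial : ℝ) := Finset.sum_le_sum key
    _ = ((min n n' + 1 : ℕ) : ℝ) * (2 ^ (n + n') * n.factorial * n'.factorial : ℝ) := by
        rw [Finset.sum_const, Finset.card_range, nsmul_eq_mul]
    _ ≤ 2 ^ (n + n') * (2 ^ (n + n') * n.factorial * n'.factorial : ℝ) := by
        have hcard : (min n n' + 1 : ℕ) ≤ 2 ^ (n + n') := by
          have : min n n' + 1 ≤ n + n' := by omega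
          calc min n n' + 1 ≤ n + n' := this
            _ ≤ 2 ^ (n + n') := Nat.le_of_lt Nat.lt_two_pow_self
        have : ((min n n' + 1 : ℕ) : ℝ) ≤ (2 ^ (n + n') : ℝ) := by exact_mod_cast hcard
        apply mul_le_mul_of_nonneg_right _ (by positivity)
        exact this
    _ = 2 ^ (2 * (n + n')) * n.factorial * n'.factorial := by
        rw [two_mul, pow_add]; ring
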